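/- Let N ≥ 1 and let a, b : ℝ → ℝ be continuous. Let (σ_m)_{m∈ℕ} be positive reals with σ_m → 0, and for each m let (x^m, β^m) ∈ ℝ^N × ℝ^N satisfy the stationary Gauss–Galerkin equations with drift a, diffusion b and parameter σ_m, with x^m_1 < … < x^m_N, β^m_i > 0 for all i, and Σ_i β^m_i = 1. If x^m → x* and β^m → β* as m → ∞, then β*_i · a(x*_i) = 0 for every i; in particular the limiting probability measure Σ_i β*_i δ_{x*_i} is supported in the zero set of the drift a. -/

import Mathlib

open Finset

/-- `l'_{ii} = ∑_{k≠i} 1/(x_i − x_k)`, the derivative of the `i`-th Lagrange basis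
polynomial at its own node. -/
noncomputable def lpDiag {N : ℕ} (x : Fin N → ℝ) (i : Fin N) : ℝ :=
  ∑ k ∈ Finset.univ.erase i, 1 / (x i - x k)

/-- `l'_{ij} = (∏_{k≠j}(x_j − x_k)) / ((x_j − x_i)·∏_{k≠i}(x_i − x_k))` for `j ≠ i`,
the derivative of the `i`-th Lagrange basis polynomial at the node `x_j`. -/
noncomputable def lpOff {N : ℕ} (x : Fin N → ℝ) (i j : Fin N) : ℝ :=
  (∏ k ∈ Finset.univ.erase j, (x j - x k)) /
    ((x j - x i) * ∏ k ∈ Finset.univ.erase i, (x i - x k))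

/-- `l''_{ii} = (∑_{k≠i} 1/(x_i − x_k))² − ∑_{k≠i} 1/(x_i − x_k)²`, the second derivative
of the `i`-th Lagrange basis polynomial at its own node. -/
noncomputable def lppDiag {N : ℕ} (x : Fin N → ℝ) (i : Fin N) : ℝ :=
  (∑ k ∈ Finset.univ.erase i, 1 / (x i - x k)) ^ 2 -
    ∑ k ∈ Finset.univ.erase i, 1 / (x i - x k) ^ 2

/-- Right-hand side of the Gauss–Galerkin node equation (the `x`-equation):
`β_i A_i + σ²(2 β_i b(x_i)² l'_{ii} + ∑_{j≠i} β_j b(x_j)² (x_j − x_i)(l'_{ij})²)`,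
where `A_i` is the drift value at node `i` (possibly configuration dependent). -/
noncomputable def ggDriftRHS {N : ℕ} (A : Fin N → ℝ) (b : ℝ → ℝ) (σ : ℝ)
    (x β : Fin N → ℝ) (i : Fin N) : ℝ :=
  β i * A i + σ ^ 2 * (2 * β i * (b (x i)) ^ 2 * lpDiag x i +
    ∑ j ∈ Finset.univ.erase i, β j * (b (x j)) ^ 2 * (x j - x i) * (lpOff x i j) ^ 2)

/-- Right-hand side of the Gauss–Galerkin weight equation (the `β`-equation):
`2 β_i A_i l'_{ii} + σ²(β_i b(x_i)²((l'_{ii})² + l''_{ii}) + ∑_{j≠i} β_j b(x_j)²(l'_{ij})²)`. -/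
noncomputable def ggWeightRHS {N : ℕ} (A : Fin N → ℝ) (b : ℝ → ℝ) (σ : ℝ)
    (x β : Fin N → ℝ) (i : Fin N) : ℝ :=
  2 * β i * A i * lpDiag x i +
    σ ^ 2 * (β i * (b (x i)) ^ 2 * ((lpDiag x i) ^ 2 + lppDiag x i) +
      ∑ j ∈ Finset.univ.erase i, β j * (b (x j)) ^ 2 * (lpOff x i j) ^ 2)

/-- The stationary Gauss–Galerkin equations with node-dependent drift values `A_i`. -/
def StationaryGGWithDrift {N : ℕ} (A : Fin N → ℝ) (b : ℝ → ℝ) (σ : ℝ)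
    (x β : Fin N → ℝ) : Prop :=
  ∀ i, 0 = ggDriftRHS A b σ x β i ∧ 0 = ggWeightRHS A b σ x β i

/-- The stationary Gauss–Galerkin equations with drift `a : ℝ → ℝ`,
diffusion `b : ℝ → ℝ` and parameter `σ`. -/
def StationaryGG {N : ℕ} (a b : ℝ → ℝ) (σ : ℝ) (x β : Fin N → ℝ) : Prop :=
  StationaryGGWithDrift (fun i => a (x i)) b σ x β

section
open Polynomial

namespace GGAux

variable {N : ℕ} {x : Fin N → ℝ}

/-- denominator -/
noncomputable def den (x : Fin N → ℝ) (i : Fin N) : ℝ := ∏ k ∈ univ.erase i, (x i - x k)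

/-- numerator polynomial of Lagrange basis -/
noncomputable def nod (x : Fin N → ℝ) (i : Fin N) : ℝ[X] := ∏ k ∈ univ.erase i, (X - C (x k))

/-- Lagrange basis polynomial -/
noncomputable def ell (x : Fin N → ℝ) (i : Fin N) : ℝ[X] := C (den x i)⁻¹ * nod x i

lemma sub_ne (hx : Function.Injective x) {i j : Fin N} (h : i ≠ j) : x i - x j ≠ 0 :=
  sub_ne_zero.mpr (fun he => h (hx he))

lemma den_ne (hx : Function.Injective x) (i : Fin N) : den x i ≠ 0 := by
  refine Finset.prod_ne_zero_iff.mpr fun k hk => ?_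
  exact sub_ne hx (Finset.ne_of_mem_erase hk).symm

lemma derivative_prod_lin (s : Finset (Fin N)) (c : Fin N → ℝ) :
    derivative (∏ k ∈ s, (X - C (c k))) = ∑ t ∈ s, ∏ k ∈ s.erase t, (X - C (c k)) := by
  induction s using Finset.induction_on with
  | empty => simp
  | @insert a s ha ih =>
    rw [Finset.prod_insert ha, derivative_mul, ih, Finset.sum_insert ha,
      Finset.erase_insert ha]
    have h1 : ∀ t ∈ s, (insert a s).erase t = insert a (s.erase t) := by
      intro t ht
      exact Finset.erase_insert_of_ne (fun he => ha (he ▸ ht))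
    have h2 : ∑ t ∈ s, ∏ k ∈ (insert a s).erase t, (X - C (c k)) =
        ∑ t ∈ s, (X - C (c a)) * ∏ k ∈ s.erase t, (X - C (c k)) :=
      Finset.sum_congr rfl (fun t ht => by
        rw [h1 t ht, Finset.prod_insert (fun hc => ha (Finset.mem_of_mem_erase hc))])
    rw [h2, ← Finset.mul_sum]
    simp

lemma eval_nod_self (i : Fin N) : eval (x i) (nod x i) = den x i := by
  simp [nod, den, eval_prod]

lemma eval_nod_off {i j : Fin N} (h : j ≠ i) : eval (x j) (nod x i) = 0 := by
  rw [nod, eval_prod]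
  exact Finset.prod_eq_zero (Finset.mem_erase.mpr ⟨h, Finset.mem_univ j⟩) (by simp)

lemma eval_dnod_off (hx : Function.Injective x) {i j : Fin N} (h : j ≠ i) :
    eval (x j) (derivative (nod x i)) =
      (∏ k ∈ univ.erase j, (x j - x k)) / (x j - x i) := by
  rw [nod, derivative_prod_lin, eval_finset_sum]
  rw [Finset.sum_eq_single j]
  · rw [eval_prod]
    have hij : i ∈ univ.erase j := Finset.mem_erase.mpr ⟨fun he => h he.symm, Finset.mem_univ i⟩
    have := Finset.mul_prod_erase (univ.erase j) (fun k => x j - x k) hij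
    rw [Finset.erase_right_comm]
    simp only [eval_sub, eval_X, eval_C]
    field_simp [sub_ne hx (fun he => h he)]
    linarith [this]
  · intro t ht htj
    rw [eval_prod]
    refine Finset.prod_eq_zero (i := j) ?_ (by simp)
    exact Finset.mem_erase.mpr ⟨Ne.symm htj, Finset.mem_erase.mpr ⟨h, Finset.mem_univ j⟩⟩
  · intro hj
    exact absurd (Finset.mem_erase.mpr ⟨h, Finset.mem_univ j⟩) hj

lemma eval_dnod_self (hx : Function.Injective x) (i : Fin N) :
    eval (x i) (derivative (nod x i)) = den x i * lpDiag x i := by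
  rw [nod, derivative_prod_lin, eval_finset_sum, lpDiag, Finset.mul_sum]
  refine Finset.sum_congr rfl fun t ht => ?_
  rw [eval_prod]
  simp only [eval_sub, eval_X, eval_C]
  have h1 := Finset.mul_prod_erase (univ.erase i) (fun k => x i - x k) ht
  have h2 : x i - x t ≠ 0 := sub_ne hx (Finset.ne_of_mem_erase ht).symm
  rw [den]
  field_simp
  linarith [h1]

end GGAux

namespace GGAux

variable {N : ℕ} {x : Fin N → ℝ}

lemma eval_ddnod_self (hx : Function.Injective x) (i : Fin N) :
    eval (x i) (derivative (derivative (nod x i))) = den x i * lppDiag x i := by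
  rw [nod, derivative_prod_lin, map_sum, eval_finset_sum]
  have key : ∀ t ∈ univ.erase i,
      eval (x i) (derivative (∏ k ∈ (univ.erase i).erase t, (X - C (x k)))) =
        den x i * ((1 / (x i - x t)) * ((∑ k ∈ univ.erase i, 1 / (x i - x k)) - 1 / (x i - x t))) := by
    intro t ht
    rw [derivative_prod_lin, eval_finset_sum]
    have step : ∀ u ∈ (univ.erase i).erase t,
        eval (x i) (∏ k ∈ ((univ.erase i).erase t).erase u, (X - C (x k))) =
          den x i * (1 / (x i - x t)) * (1 / (x i - x u)) := by
      intro u hu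
      rw [eval_prod]
      have h1 := Finset.mul_prod_erase ((univ.erase i).erase t) (fun k => x i - x k) hu
      have h2 := Finset.mul_prod_erase (univ.erase i) (fun k => x i - x k) ht
      have hut : x i - x u ≠ 0 :=
        sub_ne hx (Finset.ne_of_mem_erase (Finset.mem_of_mem_erase hu)).symm
      have htt : x i - x t ≠ 0 := sub_ne hx (Finset.ne_of_mem_erase ht).symm
      simp only [eval_sub, eval_X, eval_C]
      rw [den, ← h2, ← h1]
      field_simp
    rw [Finset.sum_congr rfl step, ← Finset.mul_sum, Finset.sum_erase_eq_sub ht]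
    ring
  rw [Finset.sum_congr rfl key, ← Finset.mul_sum, lppDiag]
  congr 1
  have gen : ∀ a S : ℝ, 1 / a * (S - 1 / a) = 1 / a * S - 1 / a ^ 2 := fun a S => by
    rcases eq_or_ne a 0 with h | h
    · simp [h]
    · field_simp
  have expand : ∀ t ∈ univ.erase i,
      1 / (x i - x t) * ((∑ k ∈ univ.erase i, 1 / (x i - x k)) - 1 / (x i - x t)) =
        1 / (x i - x t) * (∑ k ∈ univ.erase i, 1 / (x i - x k)) - 1 / (x i - x t) ^ 2 :=
    fun t _ => gen _ _
  rw [Finset.sum_congr rfl expand, Finset.sum_sub_distrib, ← Finset.sum_mul]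
  ring

lemma eval_ell (hx : Function.Injective x) (i j : Fin N) :
    eval (x j) (ell x i) = if j = i then 1 else 0 := by
  rw [ell, eval_mul, eval_C]
  split
  · rename_i h; subst h; rw [eval_nod_self, inv_mul_cancel₀ (den_ne hx _)]
  · rename_i h; rw [eval_nod_off h, mul_zero]

lemma eval_dell_self (hx : Function.Injective x) (i : Fin N) :
    eval (x i) (derivative (ell x i)) = lpDiag x i := by
  rw [ell, derivative_C_mul, eval_mul, eval_C, eval_dnod_self hx,
    ← mul_assoc, inv_mul_cancel₀ (den_ne hx i), one_mul]

lemma eval_dell_off (hx : Function.Injective x) {i j : Fin N} (h : j ≠ i) :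
    eval (x j) (derivative (ell x i)) = lpOff x i j := by
  rw [ell, derivative_C_mul, eval_mul, eval_C, eval_dnod_off hx h, lpOff, den]
  field_simp

lemma eval_ddell_self (hx : Function.Injective x) (i : Fin N) :
    eval (x i) (derivative (derivative (ell x i))) = lppDiag x i := by
  rw [ell, derivative_C_mul, derivative_C_mul, eval_mul, eval_C, eval_ddnod_self hx,
    ← mul_assoc, inv_mul_cancel₀ (den_ne hx i), one_mul]

end GGAux

namespace GGAux

variable {N : ℕ} {x : Fin N → ℝ}

/-- Hermite basis polynomial of the first kind. -/
noncomputable def Hp (x : Fin N → ℝ) (i : Fin N) : ℝ[X] :=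
  (1 - C (2 * lpDiag x i) * (X - C (x i))) * ell x i ^ 2

/-- Hermite basis polynomial of the second kind. -/
noncomputable def Kp (x : Fin N → ℝ) (i : Fin N) : ℝ[X] :=
  (X - C (x i)) * ell x i ^ 2

lemma eval_Hp (i : Fin N) (y : ℝ) :
    eval y (Hp x i) = (1 - 2 * lpDiag x i * (y - x i)) * eval y (ell x i) ^ 2 := by
  simp [Hp]

lemma eval_Kp (i : Fin N) (y : ℝ) :
    eval y (Kp x i) = (y - x i) * eval y (ell x i) ^ 2 := by
  simp [Kp]

lemma eval_dHp (i : Fin N) (y : ℝ) :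
    eval y (derivative (Hp x i)) =
      -(2 * lpDiag x i) * eval y (ell x i) ^ 2 +
        (1 - 2 * lpDiag x i * (y - x i)) *
          (2 * eval y (ell x i) * eval y (derivative (ell x i))) := by
  simp only [Hp, derivative_mul, derivative_sub, derivative_one, derivative_C_mul,
    derivative_X, derivative_C, derivative_pow, eval_add, eval_mul, eval_sub, eval_one,
    eval_C, eval_X, eval_pow, eval_neg, eval_natCast, derivative_zero, derivative_one, eval_zero, zero_mul, mul_zero, add_zero, zero_add, neg_zero, sub_zero]
  ring

lemma eval_ddHp (i : Fin N) (y : ℝ) :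
    eval y (derivative (derivative (Hp x i))) =
      -(8 * lpDiag x i) * eval y (ell x i) * eval y (derivative (ell x i)) +
        (1 - 2 * lpDiag x i * (y - x i)) *
          (2 * eval y (derivative (ell x i)) ^ 2 +
            2 * eval y (ell x i) * eval y (derivative (derivative (ell x i)))) := by
  simp only [Hp, derivative_mul, derivative_sub, derivative_one, derivative_C_mul,
    derivative_X, derivative_C, derivative_pow, derivative_add, eval_add, eval_mul,
    eval_sub, eval_one, eval_C, eval_X, eval_pow, eval_neg, eval_natCast, derivative_zero, derivative_one, eval_zero, zero_mul, mul_zero, add_zero, zero_add, neg_zero, sub_zero]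
  ring

lemma eval_dKp (i : Fin N) (y : ℝ) :
    eval y (derivative (Kp x i)) =
      eval y (ell x i) ^ 2 +
        (y - x i) * (2 * eval y (ell x i) * eval y (derivative (ell x i))) := by
  simp only [Kp, derivative_mul, derivative_sub, derivative_X, derivative_C,
    derivative_pow, eval_add, eval_mul, eval_sub, eval_one, eval_C, eval_X, eval_pow,
    eval_natCast, derivative_zero, derivative_one, eval_zero, zero_mul, mul_zero, add_zero, zero_add, neg_zero, sub_zero]
  ring

lemma eval_ddKp (i : Fin N) (y : ℝ) :
    eval y (derivative (derivative (Kp x i))) =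
      4 * eval y (ell x i) * eval y (derivative (ell x i)) +
        (y - x i) * (2 * eval y (derivative (ell x i)) ^ 2 +
          2 * eval y (ell x i) * eval y (derivative (derivative (ell x i)))) := by
  simp only [Kp, derivative_mul, derivative_sub, derivative_X, derivative_C,
    derivative_pow, derivative_add, eval_add, eval_mul, eval_sub, eval_one, eval_C,
    eval_X, eval_pow, eval_natCast, derivative_zero, derivative_one, eval_zero, zero_mul, mul_zero, add_zero, zero_add, neg_zero, sub_zero]
  ring

end GGAux

namespace GGAux

variable {N : ℕ} {x : Fin N → ℝ}

lemma eval_Hp_node (hx : Function.Injective x) (i j : Fin N) :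
    eval (x j) (Hp x i) = if j = i then 1 else 0 := by
  rw [eval_Hp, eval_ell hx]
  split
  · rename_i h; subst h; simp
  · simp

lemma eval_Kp_node (hx : Function.Injective x) (i j : Fin N) :
    eval (x j) (Kp x i) = 0 := by
  rw [eval_Kp, eval_ell hx]
  split
  · rename_i h; subst h; simp
  · simp

lemma eval_dHp_node (hx : Function.Injective x) (i j : Fin N) :
    eval (x j) (derivative (Hp x i)) = 0 := by
  rw [eval_dHp, eval_ell hx]
  rcases eq_or_ne j i with h | h
  · subst h; rw [eval_dell_self hx]; simp
  · rw [if_neg h]; ring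

lemma eval_dKp_node (hx : Function.Injective x) (i j : Fin N) :
    eval (x j) (derivative (Kp x i)) = if j = i then 1 else 0 := by
  rw [eval_dKp, eval_ell hx]
  rcases eq_or_ne j i with h | h
  · subst h; simp
  · rw [if_neg h]; ring

lemma natDegree_ell_le (i : Fin N) : (ell x i).natDegree ≤ N - 1 := by
  rw [ell, nod]
  refine (natDegree_C_mul_le _ _).trans ((natDegree_prod_le _ _).trans ?_)
  have h : ∀ k ∈ univ.erase i, (X - C (x k)).natDegree = 1 := fun k _ => natDegree_X_sub_C _
  rw [Finset.sum_congr rfl h]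
  simp [Finset.card_erase_of_mem]

lemma natDegree_Hp_le (hN : 1 ≤ N) (i : Fin N) : (Hp x i).natDegree ≤ 2 * N - 1 := by
  rw [Hp]
  refine natDegree_mul_le.trans ?_
  have h1 : (1 - C (2 * lpDiag x i) * (X - C (x i))).natDegree ≤ 1 := by
    refine (natDegree_sub_le _ _).trans ?_
    simp only [natDegree_one, max_le_iff]
    exact ⟨Nat.zero_le _, (natDegree_C_mul_le _ _).trans (le_of_eq (natDegree_X_sub_C _))⟩
  have h3 := natDegree_ell_le (x := x) i
  have h2 : (ell x i ^ 2).natDegree ≤ 2 * (N - 1) :=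
    (natDegree_pow_le).trans (by omega)
  omega

lemma natDegree_Kp_le (hN : 1 ≤ N) (i : Fin N) : (Kp x i).natDegree ≤ 2 * N - 1 := by
  rw [Kp]
  refine natDegree_mul_le.trans ?_
  have h1 : (X - C (x i)).natDegree ≤ 1 := le_of_eq (natDegree_X_sub_C _)
  have h3 := natDegree_ell_le (x := x) i
  have h2 : (ell x i ^ 2).natDegree ≤ 2 * (N - 1) :=
    (natDegree_pow_le).trans (by omega)
  omega

end GGAux

namespace GGAux

variable {N : ℕ} {x : Fin N → ℝ}

lemma hermite_rep (hN : 1 ≤ N) (hx : Function.Injective x) (p : ℝ[X])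
    (hdeg : p.natDegree < 2 * N) :
    p = (∑ i, C (eval (x i) p) * Hp x i) + ∑ i, C (eval (x i) (derivative p)) * Kp x i := by
  set P := (∑ i, C (eval (x i) p) * Hp x i) + ∑ i, C (eval (x i) (derivative p)) * Kp x i
    with hP
  have hPeval : ∀ j, eval (x j) P = eval (x j) p := by
    intro j
    rw [hP]
    simp only [eval_add, eval_finset_sum, eval_mul, eval_C, eval_Hp_node hx,
      eval_Kp_node hx, mul_ite, mul_one, mul_zero]
    simp
  have hPder : ∀ j, eval (x j) (derivative P) = eval (x j) (derivative p) := by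
    intro j
    rw [hP, derivative_add, map_sum, map_sum]
    have h1 : ∀ i : Fin N, derivative (C (eval (x i) p) * Hp x i) =
        C (eval (x i) p) * derivative (Hp x i) := fun i => derivative_C_mul _ _
    have h2 : ∀ i : Fin N, derivative (C (eval (x i) (derivative p)) * Kp x i) =
        C (eval (x i) (derivative p)) * derivative (Kp x i) := fun i => derivative_C_mul _ _
    simp only [h1, h2, eval_add, eval_finset_sum, eval_mul, eval_C, eval_dHp_node hx,
      eval_dKp_node hx, mul_ite, mul_one, mul_zero]
    simp
  set r := p - P with hr
  have hkey : r = 0 := by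
    by_cases h0 : r = 0
    · exact h0
    exfalso
    have hdvd : ∀ i : Fin N, (X - C (x i)) ^ 2 ∣ r := by
      intro i
      have hroot : 1 < rootMultiplicity (x i) r := by
        rw [one_lt_rootMultiplicity_iff_isRoot h0]
        constructor
        · simp [IsRoot, hr, hPeval i]
        · simp [IsRoot, hr, derivative_sub, hPder i]
      calc (X - C (x i)) ^ 2 ∣ (X - C (x i)) ^ rootMultiplicity (x i) r :=
            pow_dvd_pow _ hroot
        _ ∣ r := pow_rootMultiplicity_dvd r (x i)
    have hcop : (Set.univ : Set (Fin N)).Pairwise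
        (Function.onFun IsCoprime fun i => (X - C (x i)) ^ 2) := by
      intro i _ j _ hij
      exact ((pairwise_coprime_X_sub_C hx hij)).pow
    have hprod : (∏ i : Fin N, (X - C (x i)) ^ 2) ∣ r := by
      refine Finset.prod_dvd_of_coprime ?_ fun i _ => hdvd i
      intro i _ j _ hij
      exact ((pairwise_coprime_X_sub_C hx hij)).pow
    have hdegprod : (∏ i : Fin N, (X - C (x i)) ^ 2).natDegree = 2 * N := by
      rw [natDegree_prod]
      · have h : ∀ i ∈ (univ : Finset (Fin N)), ((X - C (x i)) ^ 2).natDegree = 2 := by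
          intro i _
          rw [natDegree_pow, natDegree_X_sub_C]
        rw [Finset.sum_congr rfl h]
        simp [mul_comm]
      · intro i _
        exact pow_ne_zero _ (X_sub_C_ne_zero (x i))
    have hdegr : r.natDegree < 2 * N := by
      show (p - P).natDegree < 2 * N
      have hdP : P.natDegree ≤ 2 * N - 1 := by
        refine (natDegree_add_le _ _).trans ?_
        have hs1 : (∑ i, C (eval (x i) p) * Hp x i).natDegree ≤ 2 * N - 1 :=
          natDegree_sum_le_of_forall_le _ _ fun i _ =>
            (natDegree_C_mul_le _ _).trans (natDegree_Hp_le hN i)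
        have hs2 : (∑ i, C (eval (x i) (derivative p)) * Kp x i).natDegree ≤ 2 * N - 1 :=
          natDegree_sum_le_of_forall_le _ _ fun i _ =>
            (natDegree_C_mul_le _ _).trans (natDegree_Kp_le hN i)
        omega
      have h4 := natDegree_sub_le p P
      have h5 := max_le (le_of_lt hdeg) (lt_of_le_of_lt hdP (by omega) : P.natDegree < 2 * N).le
      omega
    exact h0 (eq_zero_of_dvd_of_natDegree_lt hprod (hdegprod ▸ hdegr))
  exact sub_eq_zero.mp hkey

end GGAux

namespace GGAux

variable {N : ℕ} {x : Fin N → ℝ}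

/-- The Fokker–Planck functional applied to a test polynomial. -/
noncomputable def Ff (A : Fin N → ℝ) (b : ℝ → ℝ) (σ : ℝ) (x β : Fin N → ℝ) (q : ℝ[X]) : ℝ :=
  ∑ j, β j * (A j * eval (x j) (derivative q) +
    σ ^ 2 / 2 * (b (x j)) ^ 2 * eval (x j) (derivative (derivative q)))

lemma Ff_Hp (hx : Function.Injective x) (A : Fin N → ℝ) (b : ℝ → ℝ) (σ : ℝ) (β : Fin N → ℝ)
    (i : Fin N) :
    Ff A b σ x β (Hp x i) =
      ggWeightRHS A b σ x β i - 2 * lpDiag x i * ggDriftRHS A b σ x β i := by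
  have hDDi : eval (x i) (derivative (derivative (Hp x i))) =
      2 * lppDiag x i - 6 * lpDiag x i ^ 2 := by
    rw [eval_ddHp, eval_ell hx, eval_dell_self hx, eval_ddell_self hx]
    simp
    ring
  have hDDj : ∀ j ∈ univ.erase i, eval (x j) (derivative (derivative (Hp x i))) =
      (1 - 2 * lpDiag x i * (x j - x i)) * (2 * lpOff x i j ^ 2) := by
    intro j hj
    have hji : j ≠ i := Finset.ne_of_mem_erase hj
    rw [eval_ddHp, eval_ell hx, if_neg hji, eval_dell_off hx hji]
    ring
  rw [Ff, ← Finset.add_sum_erase _ _ (Finset.mem_univ i)]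
  have hterm : ∀ j ∈ univ.erase i,
      β j * (A j * eval (x j) (derivative (Hp x i)) +
        σ ^ 2 / 2 * (b (x j)) ^ 2 * eval (x j) (derivative (derivative (Hp x i)))) =
      σ ^ 2 * (β j * (b (x j)) ^ 2 * (lpOff x i j) ^ 2) -
        2 * lpDiag x i * σ ^ 2 * (β j * (b (x j)) ^ 2 * (x j - x i) * (lpOff x i j) ^ 2) := by
    intro j hj
    rw [eval_dHp_node hx, hDDj j hj]
    ring
  rw [Finset.sum_congr rfl hterm, Finset.sum_sub_distrib, ← Finset.mul_sum, ← Finset.mul_sum,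
    eval_dHp_node hx, hDDi, ggWeightRHS, ggDriftRHS]
  ring

lemma Ff_Kp (hx : Function.Injective x) (A : Fin N → ℝ) (b : ℝ → ℝ) (σ : ℝ) (β : Fin N → ℝ)
    (i : Fin N) :
    Ff A b σ x β (Kp x i) = ggDriftRHS A b σ x β i := by
  have hDDi : eval (x i) (derivative (derivative (Kp x i))) = 4 * lpDiag x i := by
    rw [eval_ddKp, eval_ell hx, eval_dell_self hx, eval_ddell_self hx]
    simp
  have hDDj : ∀ j ∈ univ.erase i, eval (x j) (derivative (derivative (Kp x i))) =
      (x j - x i) * (2 * lpOff x i j ^ 2) := by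
    intro j hj
    have hji : j ≠ i := Finset.ne_of_mem_erase hj
    rw [eval_ddKp, eval_ell hx, if_neg hji, eval_dell_off hx hji]
    ring
  have hDi : eval (x i) (derivative (Kp x i)) = 1 := by
    rw [eval_dKp, eval_ell hx, if_pos rfl]
    ring
  have hDj : ∀ j ∈ univ.erase i, eval (x j) (derivative (Kp x i)) = 0 := by
    intro j hj
    rw [eval_dKp_node hx, if_neg (Finset.ne_of_mem_erase hj)]
  rw [Ff, ← Finset.add_sum_erase _ _ (Finset.mem_univ i)]
  have hterm : ∀ j ∈ univ.erase i,
      β j * (A j * eval (x j) (derivative (Kp x i)) +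
        σ ^ 2 / 2 * (b (x j)) ^ 2 * eval (x j) (derivative (derivative (Kp x i)))) =
      σ ^ 2 * (β j * (b (x j)) ^ 2 * (x j - x i) * (lpOff x i j) ^ 2) := by
    intro j hj
    rw [hDj j hj, hDDj j hj]
    ring
  rw [Finset.sum_congr rfl hterm, ← Finset.mul_sum, hDi, hDDi, ggDriftRHS]
  ring

lemma Ff_add (A : Fin N → ℝ) (b : ℝ → ℝ) (σ : ℝ) (β : Fin N → ℝ) (q r : ℝ[X]) :
    Ff A b σ x β (q + r) = Ff A b σ x β q + Ff A b σ x β r := by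
  rw [Ff, Ff, Ff, ← Finset.sum_add_distrib]
  refine Finset.sum_congr rfl fun j _ => ?_
  simp only [derivative_add, eval_add]
  ring

lemma Ff_zero (A : Fin N → ℝ) (b : ℝ → ℝ) (σ : ℝ) (β : Fin N → ℝ) :
    Ff A b σ x β 0 = 0 := by
  simp [Ff]

lemma Ff_smul (A : Fin N → ℝ) (b : ℝ → ℝ) (σ : ℝ) (β : Fin N → ℝ) (c : ℝ) (q : ℝ[X]) :
    Ff A b σ x β (C c * q) = c * Ff A b σ x β q := by
  rw [Ff, Ff, Finset.mul_sum]
  refine Finset.sum_congr rfl fun j _ => ?_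
  simp only [derivative_C_mul, eval_mul, eval_C]
  ring

lemma Ff_sum {ι : Type*} (A : Fin N → ℝ) (b : ℝ → ℝ) (σ : ℝ) (β : Fin N → ℝ)
    (s : Finset ι) (f : ι → ℝ[X]) :
    Ff A b σ x β (∑ i ∈ s, f i) = ∑ i ∈ s, Ff A b σ x β (f i) := by
  induction s using Finset.cons_induction with
  | empty => simp [Ff_zero]
  | cons a s ha ih => rw [Finset.sum_cons, Ff_add, ih, Finset.sum_cons]

/-- Key algebraic consequence: the Fokker–Planck functional vanishes on every
polynomial of degree `< 2N`. -/
theorem Ff_eq_zero (hN : 1 ≤ N) (hx : Function.Injective x) (A : Fin N → ℝ) (b : ℝ → ℝ)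
    (σ : ℝ) (β : Fin N → ℝ) (hsol : StationaryGGWithDrift A b σ x β)
    (p : ℝ[X]) (hdeg : p.natDegree < 2 * N) :
    Ff A b σ x β p = 0 := by
  conv_lhs => rw [hermite_rep hN hx p hdeg]
  rw [Ff_add, Ff_sum, Ff_sum]
  have h1 : ∀ i : Fin N, Ff A b σ x β (C (eval (x i) p) * Hp x i) = 0 := by
    intro i
    rw [Ff_smul, Ff_Hp hx, ← (hsol i).1, ← (hsol i).2]
    ring
  have h2 : ∀ i : Fin N, Ff A b σ x β (C (eval (x i) (derivative p)) * Kp x i) = 0 := by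
    intro i
    rw [Ff_smul, Ff_Kp hx, ← (hsol i).1]
    ring
  rw [Finset.sum_congr rfl fun i _ => h1 i, Finset.sum_congr rfl fun i _ => h2 i]
  simp

end GGAux

end

open Filter

/-- **Limits of stationary Gauss–Galerkin solutions as `σ ↓ 0` concentrate on zeros of
the drift.** If `(x^m, β^m)` solve the stationary Gauss–Galerkin equations with
parameters `σ_m ↓ 0`, with ordered nodes, positive weights summing to `1`, and
`(x^m, β^m) → (x*, β*)`, then `β*_i · a(x*_i) = 0` for every `i`; in particular the
limiting probability measure `∑_i β*_i δ_{x*_i}` is supported in the zero set of `a`. -/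
theorem stationaryGG_limit_on_drift_zeros {N : ℕ} (hN : 1 ≤ N)
    (a b : ℝ → ℝ) (ha : Continuous a) (hb : Continuous b)
    (σ : ℕ → ℝ) (hσpos : ∀ m, 0 < σ m) (hσlim : Tendsto σ atTop (nhds 0))
    (x β : ℕ → Fin N → ℝ)
    (hsol : ∀ m, StationaryGG a b (σ m) (x m) (β m))
    (hmono : ∀ m, StrictMono (x m))
    (hβpos : ∀ m i, 0 < β m i)
    (hβsum : ∀ m, ∑ i, β m i = 1)
    (xs βs : Fin N → ℝ)
    (hxlim : ∀ i, Tendsto (fun m => x m i) atTop (nhds (xs i)))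
    (hβlim : ∀ i, Tendsto (fun m => β m i) atTop (nhds (βs i))) :
    ∀ i, βs i * a (xs i) = 0 := by
  classical
  intro i0
  have hinj : ∀ m, Function.Injective (x m) := fun m => (hmono m).injective
  set T : Finset ℝ := (Finset.image xs Finset.univ).erase (xs i0) with hT
  set q : Polynomial ℝ := ∏ v ∈ T, (Polynomial.X - Polynomial.C v) with hq
  set p : Polynomial ℝ := (Polynomial.X - Polynomial.C (xs i0)) * q ^ 2 with hp
  have hdeg : p.natDegree < 2 * N := by
    have h2 : xs i0 ∈ Finset.image xs Finset.univ :=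
      Finset.mem_image_of_mem xs (Finset.mem_univ i0)
    have hTcard : T.card ≤ N - 1 := by
      have h1 : (Finset.image xs Finset.univ).card ≤ N :=
        (Finset.card_image_le).trans (by simp)
      rw [hT, Finset.card_erase_of_mem h2]
      omega
    have hq1 : q.natDegree ≤ N - 1 := by
      rw [hq]
      refine (Polynomial.natDegree_prod_le _ _).trans ?_
      have h : ∀ v ∈ T, (Polynomial.X - Polynomial.C v).natDegree = 1 := fun v _ =>
        Polynomial.natDegree_X_sub_C v
      rw [Finset.sum_congr rfl h]
      simpa using hTcard
    have hb1 : p.natDegree ≤ (Polynomial.X - Polynomial.C (xs i0)).natDegree +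
        (q ^ 2).natDegree := Polynomial.natDegree_mul_le
    have hb2 : (q ^ 2).natDegree ≤ 2 * (N - 1) :=
      Polynomial.natDegree_pow_le.trans (by omega)
    have hb3 : (Polynomial.X - Polynomial.C (xs i0)).natDegree = 1 :=
      Polynomial.natDegree_X_sub_C _
    omega
  have hF : ∀ m, GGAux.Ff (fun i => a (x m i)) b (σ m) (x m) (β m) p = 0 := fun m =>
    GGAux.Ff_eq_zero hN (hinj m) _ b (σ m) (β m) (hsol m) p hdeg
  -- pass to the limit
  have hlim : Tendsto (fun m => GGAux.Ff (fun i => a (x m i)) b (σ m) (x m) (β m) p) atTop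
      (nhds (∑ j, βs j * (a (xs j) * Polynomial.eval (xs j) (Polynomial.derivative p) +
        (0:ℝ) ^ 2 / 2 * (b (xs j)) ^ 2 *
          Polynomial.eval (xs j) (Polynomial.derivative (Polynomial.derivative p))))) := by
    unfold GGAux.Ff
    refine tendsto_finset_sum _ fun j _ => ?_
    have h1 := hβlim j
    have h2 : Tendsto (fun m => a (x m j)) atTop (nhds (a (xs j))) :=
      (ha.tendsto (xs j)).comp (hxlim j)
    have h3 : Tendsto (fun m => Polynomial.eval (x m j) (Polynomial.derivative p)) atTop
        (nhds (Polynomial.eval (xs j) (Polynomial.derivative p))) :=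
      ((Polynomial.derivative p).continuous.tendsto (xs j)).comp (hxlim j)
    have h4 : Tendsto (fun m => Polynomial.eval (x m j)
        (Polynomial.derivative (Polynomial.derivative p))) atTop
        (nhds (Polynomial.eval (xs j) (Polynomial.derivative (Polynomial.derivative p)))) :=
      ((Polynomial.derivative (Polynomial.derivative p)).continuous.tendsto (xs j)).comp
        (hxlim j)
    have h5 : Tendsto (fun m => b (x m j)) atTop (nhds (b (xs j))) :=
      (hb.tendsto (xs j)).comp (hxlim j)
    exact h1.mul ((h2.mul h3).add ((((hσlim.pow 2).div_const 2).mul (h5.pow 2)).mul h4))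
  have hzero : (∑ j, βs j * (a (xs j) * Polynomial.eval (xs j) (Polynomial.derivative p) +
      (0:ℝ) ^ 2 / 2 * (b (xs j)) ^ 2 *
        Polynomial.eval (xs j) (Polynomial.derivative (Polynomial.derivative p)))) = 0 := by
    have hconst : Tendsto (fun m => GGAux.Ff (fun i => a (x m i)) b (σ m) (x m) (β m) p) atTop
        (nhds 0) := by
      simpa [funext hF] using (tendsto_const_nhds : Tendsto (fun _ : ℕ => (0:ℝ)) atTop (nhds 0))
    exact tendsto_nhds_unique hlim hconst
  -- compute the derivative evaluations at the limit points
  set Q : ℝ := (Polynomial.eval (xs i0) q) ^ 2 with hQdef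
  have hder : ∀ j, Polynomial.eval (xs j) (Polynomial.derivative p) =
      if xs j = xs i0 then Q else 0 := by
    intro j
    have hdp : Polynomial.derivative p = q ^ 2 +
        (Polynomial.X - Polynomial.C (xs i0)) *
          (Polynomial.C 2 * q ^ 1 * Polynomial.derivative q) := by
      rw [hp, Polynomial.derivative_mul, Polynomial.derivative_sub, Polynomial.derivative_X,
        Polynomial.derivative_C, Polynomial.derivative_pow]
      simp
    rw [hdp]
    simp only [Polynomial.eval_add, Polynomial.eval_mul, Polynomial.eval_pow,
      Polynomial.eval_sub, Polynomial.eval_X, Polynomial.eval_C]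
    by_cases hcase : xs j = xs i0
    · rw [if_pos hcase, hcase, hQdef]
      ring
    · rw [if_neg hcase]
      have hmem : xs j ∈ T := by
        rw [hT]
        exact Finset.mem_erase.mpr ⟨hcase, Finset.mem_image_of_mem xs (Finset.mem_univ j)⟩
      have hev : Polynomial.eval (xs j) q = 0 := by
        rw [hq, Polynomial.eval_prod]
        exact Finset.prod_eq_zero hmem (by simp)
      rw [hev]
      ring
  -- reduce the sum
  have hsum : (∑ j ∈ Finset.univ.filter (fun j => xs j = xs i0), βs j) * (a (xs i0) * Q)
      = 0 := by
    rw [Finset.sum_mul, ← hzero]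
    rw [Finset.sum_filter]
    refine Finset.sum_congr rfl fun j _ => ?_
    rw [hder j]
    by_cases hcase : xs j = xs i0
    · rw [if_pos hcase, if_pos hcase, hcase]
      ring
    · rw [if_neg hcase, if_neg hcase]
      ring
  have hβnn : ∀ j, 0 ≤ βs j := fun j =>
    ge_of_tendsto (hβlim j) (Eventually.of_forall fun m => (hβpos m j).le)
  rcases eq_or_ne (a (xs i0)) 0 with hA | hA
  · rw [hA, mul_zero]
  · have hQne : Q ≠ 0 := by
      rw [hQdef]
      refine pow_ne_zero _ ?_
      rw [hq, Polynomial.eval_prod]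
      refine Finset.prod_ne_zero_iff.mpr fun v hv => ?_
      simp only [Polynomial.eval_sub, Polynomial.eval_X, Polynomial.eval_C]
      exact sub_ne_zero.mpr (Ne.symm (Finset.ne_of_mem_erase hv))
    have hsum0 : (∑ j ∈ Finset.univ.filter (fun j => xs j = xs i0), βs j) = 0 := by
      rcases mul_eq_zero.mp hsum with h | h
      · exact h
      · exact absurd h (mul_ne_zero hA hQne)
    have hmem : i0 ∈ Finset.univ.filter (fun j => xs j = xs i0) := by
      simp
    have := (Finset.sum_eq_zero_iff_of_nonneg fun j _ => hβnn j).mp hsum0 i0 hmem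
    rw [this, zero_mul]
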